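/- With L(j,t) as defined above, for all integers 1 ≤ t ≤ j: L(j,t) = Σ_{i=1}^{t} λ_i L(j−i, t−i) + Σ_{i=t+1}^{j} λ_i. -/

import Mathlib

/-- `Λ_j = λ₁ + ⋯ + λ_j`. -/
def Lam (lam : ℕ → ℕ) (j : ℕ) : ℕ := ∑ i ∈ Finset.Icc 1 j, lam i

lemma icc_split (t M : ℕ) (htM : t ≤ M) (f : ℕ → ℚ) :
    ∑ i ∈ Finset.Icc 1 M, f i = ∑ i ∈ Finset.Icc 1 t, f i + ∑ i ∈ Finset.Icc (t+1) M, f i := by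
  rw [← Finset.Ico_add_one_right_eq_Icc, ← Finset.Ico_add_one_right_eq_Icc, ← Finset.Ico_add_one_right_eq_Icc,
    Finset.sum_Ico_consecutive _ (by omega) (by omega)]

lemma icc_split' (s t M : ℕ) (hst : s ≤ t + 1) (htM : t ≤ M) (f : ℕ → ℚ) :
    ∑ i ∈ Finset.Icc s M, f i = ∑ i ∈ Finset.Icc s t, f i + ∑ i ∈ Finset.Icc (t+1) M, f i := by
  rw [← Finset.Ico_add_one_right_eq_Icc, ← Finset.Ico_add_one_right_eq_Icc, ← Finset.Ico_add_one_right_eq_Icc,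
    Finset.sum_Ico_consecutive _ (by omega) (by omega)]

lemma sumB (k : ℕ) (lam : ℕ → ℕ) (hzero : ∀ i, k < i → lam i = 0)
    (a : ℤ → ℚ) (ha0 : ∀ i : ℤ, i ≤ 0 → a i = 1)
    (harec : ∀ n : ℤ, 1 ≤ n → a n = ∑ i ∈ Finset.Icc 1 k, (lam i : ℚ) * a (n - i))
    (n : ℤ) (hn : 1 ≤ n) (t : ℕ) (hnt : n ≤ t + 1) :
    ∑ i ∈ Finset.Icc 1 t, (lam i : ℚ) * a (n - i)
      = a n - (Lam lam k : ℚ) + (Lam lam t : ℚ) := by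
  obtain ⟨M, htM, hkM⟩ : ∃ M, t ≤ M ∧ k ≤ M := ⟨max t k, le_max_left _ _, le_max_right _ _⟩
  have h1 : ∑ i ∈ Finset.Icc 1 M, (lam i : ℚ) * a (n - i)
      = ∑ i ∈ Finset.Icc 1 t, (lam i : ℚ) * a (n - i)
        + ∑ i ∈ Finset.Icc (t+1) M, (lam i : ℚ) * a (n - i) :=
    icc_split t M htM _
  have h2 : ∑ i ∈ Finset.Icc 1 M, (lam i : ℚ) * a (n - i)
      = ∑ i ∈ Finset.Icc 1 k, (lam i : ℚ) * a (n - i)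
        + ∑ i ∈ Finset.Icc (k+1) M, (lam i : ℚ) * a (n - i) :=
    icc_split k M hkM _
  have h3 : ∑ i ∈ Finset.Icc (k+1) M, (lam i : ℚ) * a (n - i) = 0 := by
    apply Finset.sum_eq_zero
    intro i hi
    simp only [Finset.mem_Icc] at hi
    rw [hzero i (by omega)]
    simp
  have h4 : ∑ i ∈ Finset.Icc (t+1) M, (lam i : ℚ) * a (n - i)
      = ∑ i ∈ Finset.Icc (t+1) M, (lam i : ℚ) := by
    apply Finset.sum_congr rfl
    intro i hi
    simp only [Finset.mem_Icc] at hi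
    obtain ⟨hi1, hi2⟩ := hi
    rw [ha0 (n - i) (by
      have : (t : ℤ) + 1 ≤ (i : ℤ) := by exact_mod_cast hi1
      omega)]
    ring
  have h5 : (Lam lam M : ℚ) = (Lam lam t : ℚ) + ∑ i ∈ Finset.Icc (t+1) M, (lam i : ℚ) := by
    unfold Lam
    push_cast [Nat.cast_sum]
    exact icc_split t M htM _
  have h6 : (Lam lam M : ℚ) = (Lam lam k : ℚ) + ∑ i ∈ Finset.Icc (k+1) M, (lam i : ℚ) := by
    unfold Lam
    push_cast [Nat.cast_sum]
    exact icc_split k M hkM _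
  have h7 : ∑ i ∈ Finset.Icc (k+1) M, (lam i : ℚ) = 0 := by
    apply Finset.sum_eq_zero
    intro i hi
    simp only [Finset.mem_Icc] at hi
    exact_mod_cast hzero i (by omega)
  have h8 := harec n hn
  linarith

lemma closedForm (k : ℕ) (lam : ℕ → ℕ) (a : ℤ → ℚ) (L : ℕ → ℕ → ℚ)
    (hLjj : ∀ j : ℕ, L j j = (a (j + 1) - a j) / ((Lam lam k : ℚ) - 1))
    (hLrec : ∀ j t : ℕ, t < j →
      L j t = L j (t + 1) -
        ((Lam lam (j - t) : ℚ) - 1) * (a (t + 1) - a t) / ((Lam lam k : ℚ) - 1)) :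
    ∀ d t j : ℕ, j = t + d →
      L j t = (a ((j:ℤ) + 1) - a t
        - ∑ i ∈ Finset.Icc 1 d, (lam i : ℚ) * (a ((j:ℤ) + 1 - i) - a t))
          / ((Lam lam k : ℚ) - 1) := by
  intro d
  induction d with
  | zero =>
    intro t j hj
    subst hj
    simpa using hLjj j
  | succ d IH =>
    intro t j hj
    have hrec := hLrec j t (by omega)
    rw [show j - t = d + 1 from by omega] at hrec
    have hIH := IH (t + 1) j (by omega)
    rw [hrec, hIH]
    rw [div_sub_div_same]
    congr 1
    have hS : ∑ i ∈ Finset.Icc 1 (d+1), (lam i : ℚ) * (a ((j:ℤ) + 1 - i) - a t)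
        = ∑ i ∈ Finset.Icc 1 d, (lam i : ℚ) * (a ((j:ℤ) + 1 - i) - a t)
          + (lam (d+1) : ℚ) * (a ((j:ℤ) + 1 - (d+1:ℕ)) - a t) :=
      Finset.sum_Icc_succ_top (by omega) _
    have harg : ((j:ℤ) + 1 - ((d+1:ℕ):ℤ)) = (t:ℤ) + 1 := by push_cast; omega
    rw [harg] at hS
    have hΛ1 : (Lam lam (d+1) : ℚ) = (Lam lam d : ℚ) + (lam (d+1) : ℚ) := by
      unfold Lam
      push_cast [Nat.cast_sum]
      exact Finset.sum_Icc_succ_top (by omega) _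
    have hdiff : ∑ i ∈ Finset.Icc 1 d, (lam i : ℚ) * (a ((j:ℤ) + 1 - i) - a t)
        - ∑ i ∈ Finset.Icc 1 d, (lam i : ℚ) * (a ((j:ℤ) + 1 - i) - a (t+1:ℕ))
        = (Lam lam d : ℚ) * (a ((t:ℤ)+1) - a t) := by
      rw [← Finset.sum_sub_distrib]
      have : ∀ i ∈ Finset.Icc 1 d, (lam i : ℚ) * (a ((j:ℤ) + 1 - i) - a t)
          - (lam i : ℚ) * (a ((j:ℤ) + 1 - i) - a (t+1:ℕ))
          = (lam i : ℚ) * (a ((t:ℤ)+1) - a t) := by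
        intro i hi
        push_cast
        ring
      rw [Finset.sum_congr rfl this, ← Finset.sum_mul]
      congr 1
      unfold Lam
      push_cast [Nat.cast_sum]
      rfl
    push_cast at hS hΛ1 hdiff ⊢
    linear_combination hS + hdiff - (a ((t:ℤ)+1) - a (t:ℤ)) * hΛ1

lemma Lzero (k : ℕ) (lam : ℕ → ℕ) (hzero : ∀ i, k < i → lam i = 0)
    (hΛ : 2 ≤ Lam lam k)
    (a : ℤ → ℚ) (ha0 : ∀ i : ℤ, i ≤ 0 → a i = 1)
    (harec : ∀ n : ℤ, 1 ≤ n → a n = ∑ i ∈ Finset.Icc 1 k, (lam i : ℚ) * a (n - i))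
    (L : ℕ → ℕ → ℚ)
    (hLjj : ∀ j : ℕ, L j j = (a (j + 1) - a j) / ((Lam lam k : ℚ) - 1))
    (hLrec : ∀ j t : ℕ, t < j →
      L j t = L j (t + 1) -
        ((Lam lam (j - t) : ℚ) - 1) * (a (t + 1) - a t) / ((Lam lam k : ℚ) - 1)) :
    ∀ m : ℕ, L m 0 = 1 := by
  intro m
  have hD : ((Lam lam k : ℚ) - 1) ≠ 0 := by
    have : (2:ℚ) ≤ (Lam lam k : ℚ) := by exact_mod_cast hΛ
    linarith
  have hcf := closedForm k lam a L hLjj hLrec m 0 m (by omega)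
  rw [show (((0:ℕ)):ℤ) = 0 from rfl] at hcf
  rw [ha0 0 le_rfl] at hcf
  have hb := sumB k lam hzero a ha0 harec ((m:ℤ)+1) (by omega) m (by omega)
  have hsub : ∑ i ∈ Finset.Icc 1 m, (lam i : ℚ) * (a ((m:ℤ) + 1 - i) - 1)
      = (∑ i ∈ Finset.Icc 1 m, (lam i : ℚ) * a ((m:ℤ) + 1 - i)) - (Lam lam m : ℚ) := by
    have : ∀ i ∈ Finset.Icc 1 m, (lam i : ℚ) * (a ((m:ℤ) + 1 - i) - 1)
        = (lam i : ℚ) * a ((m:ℤ) + 1 - i) - (lam i : ℚ) := by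
      intro i hi; ring
    rw [Finset.sum_congr rfl this, Finset.sum_sub_distrib]
    congr 1
    unfold Lam
    push_cast [Nat.cast_sum]
    rfl
  rw [hcf, hsub, hb]
  rw [show a ((m:ℤ)+1) - 1 - (a ((m:ℤ)+1) - (Lam lam k : ℚ) + (Lam lam m : ℚ) - (Lam lam m : ℚ))
      = (Lam lam k : ℚ) - 1 from by ring]
  exact div_self hD

/-- for `1 ≤ t ≤ j`, `L(j,t) = ∑_{i=1}^t λ_i L(j-i,t-i) + ∑_{i=t+1}^j λ_i`. -/
theorem stmt11 (k : ℕ) (lam : ℕ → ℕ) (hk : 1 ≤ k)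
    (h1 : 1 ≤ lam 1) (hkpos : 1 ≤ lam k) (hzero : ∀ i, k < i → lam i = 0)
    (hΛ : 2 ≤ Lam lam k)
    (a : ℤ → ℚ)
    (ha0 : ∀ i : ℤ, i ≤ 0 → a i = 1)
    (harec : ∀ n : ℤ, 1 ≤ n → a n = ∑ i ∈ Finset.Icc 1 k, (lam i : ℚ) * a (n - i))
    (L : ℕ → ℕ → ℚ)
    (hLjj : ∀ j : ℕ, L j j = (a (j + 1) - a j) / ((Lam lam k : ℚ) - 1))
    (hLrec : ∀ j t : ℕ, t < j →
      L j t = L j (t + 1) -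
        ((Lam lam (j - t) : ℚ) - 1) * (a (t + 1) - a t) / ((Lam lam k : ℚ) - 1)) :
    ∀ j t : ℕ, 1 ≤ t → t ≤ j →
      L j t = (∑ i ∈ Finset.Icc 1 t, (lam i : ℚ) * L (j - i) (t - i))
        + ∑ i ∈ Finset.Icc (t + 1) j, (lam i : ℚ) := by
  have key : ∀ j d t : ℕ, 1 ≤ t → t + d = j →
      L j t = (∑ i ∈ Finset.Icc 1 t, (lam i : ℚ) * L (j - i) (t - i))
        + ∑ i ∈ Finset.Icc (t + 1) j, (lam i : ℚ) := by
    intro j d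
    induction d with
    | zero =>
      intro t ht htj
      have htj' : t = j := by omega
      subst htj'
      rw [show Finset.Icc (t+1) t = ∅ from Finset.Icc_eq_empty (by omega), Finset.sum_empty, add_zero]
      have e1 : ∀ i ∈ Finset.Icc 1 t, (lam i : ℚ) * L (t - i) (t - i)
          = ((lam i : ℚ) * a ((t:ℤ) + 1 - i) - (lam i : ℚ) * a ((t:ℤ) - i))
              / ((Lam lam k : ℚ) - 1) := by
        intro i hi
        simp only [Finset.mem_Icc] at hi
        rw [hLjj (t - i)]
        rw [show ((t - i : ℕ) : ℤ) = (t:ℤ) - i from by omega]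
        rw [show (t:ℤ) - i + 1 = (t:ℤ) + 1 - i from by ring]
        ring
      rw [Finset.sum_congr rfl e1, ← Finset.sum_div, Finset.sum_sub_distrib]
      rw [sumB k lam hzero a ha0 harec ((t:ℤ)+1) (by omega) t (by omega),
        sumB k lam hzero a ha0 harec (t:ℤ) (by exact_mod_cast ht) t (by omega)]
      rw [hLjj t]
      congr 1
      ring
    | succ d IH =>
      intro t ht htj
      have hrec := hLrec j t (by omega)
      rw [show j - t = d + 1 from by omega] at hrec
      have hIH := IH (t + 1) (by omega) (by omega)
      have hz := Lzero k lam hzero hΛ a ha0 harec L hLjj hLrec (j - (t+1))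
      have hsplit1 : ∑ i ∈ Finset.Icc 1 (t+1), (lam i : ℚ) * L (j - i) (t + 1 - i)
          = ∑ i ∈ Finset.Icc 1 t, (lam i : ℚ) * L (j - i) (t + 1 - i)
            + (lam (t+1) : ℚ) * L (j - (t+1)) (t + 1 - (t+1)) :=
        Finset.sum_Icc_succ_top (by omega) _
      rw [show t + 1 - (t+1) = 0 from by omega, hz, mul_one] at hsplit1
      have hsplit2 : ∑ i ∈ Finset.Icc (t+1) j, (lam i : ℚ)
          = (lam (t+1) : ℚ) + ∑ i ∈ Finset.Icc (t+2) j, (lam i : ℚ) := by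
        rw [icc_split' (t+1) (t+1) j (by omega) (by omega)]
        simp
      have E1 : ∀ i ∈ Finset.Icc 1 t, (lam i : ℚ) * L (j - i) (t - i)
          = (lam i : ℚ) * L (j - i) (t + 1 - i)
            - ((Lam lam (d+1) : ℚ) - 1) / ((Lam lam k : ℚ) - 1)
              * ((lam i : ℚ) * a ((t:ℤ) + 1 - i) - (lam i : ℚ) * a ((t:ℤ) - i)) := by
        intro i hi
        simp only [Finset.mem_Icc] at hi
        have hr := hLrec (j - i) (t - i) (by omega)
        rw [show (j - i) - (t - i) = d + 1 from by omega,
          show (t - i) + 1 = t + 1 - i from by omega] at hr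
        rw [show ((t - i : ℕ) : ℤ) = (t:ℤ) - i from by omega] at hr
        rw [show (t:ℤ) - i + 1 = (t:ℤ) + 1 - i from by ring] at hr
        rw [hr]
        ring
      have hS1 : ∑ i ∈ Finset.Icc 1 t, (lam i : ℚ) * L (j - i) (t - i)
          = ∑ i ∈ Finset.Icc 1 t, (lam i : ℚ) * L (j - i) (t + 1 - i)
            - ((Lam lam (d+1) : ℚ) - 1) / ((Lam lam k : ℚ) - 1)
              * ((∑ i ∈ Finset.Icc 1 t, (lam i : ℚ) * a ((t:ℤ) + 1 - i))
                - ∑ i ∈ Finset.Icc 1 t, (lam i : ℚ) * a ((t:ℤ) - i)) := by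
        rw [Finset.sum_congr rfl E1, Finset.sum_sub_distrib, ← Finset.mul_sum,
          Finset.sum_sub_distrib]
      have hB1 := sumB k lam hzero a ha0 harec ((t:ℤ)+1) (by omega) t (by omega)
      have hB2 := sumB k lam hzero a ha0 harec (t:ℤ) (by exact_mod_cast ht) t (by omega)
      linear_combination hrec + hIH + hsplit1 - hS1 - hsplit2
        + ((Lam lam (d+1) : ℚ) - 1) / ((Lam lam k : ℚ) - 1) * (hB1 - hB2)
  intro j t ht htj
  exact key j (j - t) t ht (by omega)
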